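/- The map Ψ₁(λ, ϑ) = ((aλ)^α · C(ϑ·T₀), (aλ)^β · S(ϑ·T₀)) is a bijection from (0, ∞) × [0, 1) onto ℝ² \ {(0, 0)}. -/

import Mathlib

open Set

lemma pow_abs_lip (m : ℕ) {x y : ℝ} (hx : |x| ≤ 1) (hy : |y| ≤ 1) :
    |x ^ m - y ^ m| ≤ m * |x - y| := by
  rw [← geom_sum₂_mul, abs_mul]
  gcongr
  calc |∑ i ∈ Finset.range m, x ^ i * y ^ (m - 1 - i)|
      ≤ ∑ i ∈ Finset.range m, |x ^ i * y ^ (m - 1 - i)| := Finset.abs_sum_le_sum_abs _ _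
    _ ≤ ∑ _i ∈ Finset.range m, (1:ℝ) := by
        refine Finset.sum_le_sum fun i _ => ?_
        rw [abs_mul, abs_pow, abs_pow]
        exact mul_le_one₀ (pow_le_one₀ (abs_nonneg _) hx) (by positivity)
          (pow_le_one₀ (abs_nonneg _) hy)
    _ = m := by simp

lemma vlip (m : ℕ) : LipschitzOnWith ((m + 1 : ℕ) : NNReal)
    (fun p : ℝ × ℝ => ((p.2, -(p.1 ^ m)) : ℝ × ℝ)) (Metric.closedBall 0 1) := by
  rw [lipschitzOnWith_iff_dist_le_mul]
  intro p hp q hq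
  rw [Metric.mem_closedBall, dist_zero_right] at hp hq
  have hp1 : |p.1| ≤ 1 := le_trans (norm_fst_le p) hp
  have hq1 : |q.1| ≤ 1 := le_trans (norm_fst_le q) hq
  rw [Prod.dist_eq, Prod.dist_eq]
  simp only [Real.dist_eq]
  push_cast
  have h2 : |-(p.1^m) - -(q.1^m)| = |p.1^m - q.1^m| := by rw [← abs_neg]; ring_nf
  have h3 : |p.1^m - q.1^m| ≤ m * |p.1 - q.1| := pow_abs_lip m hp1 hq1
  have hmax : (0:ℝ) ≤ max |p.1 - q.1| |p.2 - q.2| := le_trans (abs_nonneg _) (le_max_left _ _)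
  refine max_le ?_ ?_
  · nlinarith [le_max_left |p.1 - q.1| |p.2 - q.2|, le_max_right |p.1 - q.1| |p.2 - q.2|,
      Nat.cast_nonneg (α := ℝ) m]
  · rw [h2]
    calc |p.1^m - q.1^m| ≤ m * |p.1 - q.1| := h3
      _ ≤ (m + 1) * max |p.1 - q.1| |p.2 - q.2| := by
          have := le_max_left |p.1 - q.1| |p.2 - q.2|
          nlinarith [abs_nonneg (p.1 - q.1), Nat.cast_nonneg (α := ℝ) m]

lemma ode_uniq (m : ℕ) (F G : ℝ → ℝ × ℝ)
    (hF : ∀ t, HasDerivAt F ((F t).2, -((F t).1 ^ m)) t)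
    (hFb : ∀ t, ‖F t‖ ≤ 1)
    (hG : ∀ t, HasDerivAt G ((G t).2, -((G t).1 ^ m)) t)
    (hGb : ∀ t, ‖G t‖ ≤ 1)
    (t0 : ℝ) (h0 : F t0 = G t0) : ∀ t, F t = G t := by
  intro t
  have hm : t0 ∈ Ioo (min t t0 - 1) (max t t0 + 1) :=
    ⟨by have := min_le_right t t0; linarith, by have := le_max_right t t0; linarith⟩
  have key : Set.EqOn F G (Icc (min t t0 - 1) (max t t0 + 1)) := by
    apply ODE_solution_unique_of_mem_Icc (v := fun _ p => ((p.2, -(p.1 ^ m)) : ℝ × ℝ))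
      (s := fun _ => Metric.closedBall 0 1) (fun _ _ => vlip m) hm
    · exact fun s hs => (hF s).continuousAt.continuousWithinAt
    · exact fun s _ => hF s
    · exact fun s _ => by simpa [Metric.mem_closedBall, dist_zero_right] using hFb s
    · exact fun s hs => (hG s).continuousAt.continuousWithinAt
    · exact fun s _ => hG s
    · exact fun s _ => by simpa [Metric.mem_closedBall, dist_zero_right] using hGb s
    · exact h0
  exact key ⟨by have := min_le_left t t0; linarith, by have := le_max_left t t0; linarith⟩

/-- The map `Ψ₁(λ, ϑ) = ((aλ)^α · C(ϑ·T₀), (aλ)^β · S(ϑ·T₀))` is a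
bijection from `(0, ∞) × [0, 1)` onto `ℝ² \ {(0, 0)}`. -/
theorem Psi1_bijective
    (n : ℕ) (hn : 1 ≤ n)
    (C S : ℝ → ℝ)
    (hC' : ∀ t, HasDerivAt C (S t) t)
    (hS' : ∀ t, HasDerivAt S (-(C t ^ (2 * n + 1))) t)
    (hC0 : C 0 = 1) (hS0 : S 0 = 0)
    (T₀ : ℝ) (hT₀pos : 0 < T₀)
    (hCper : Function.Periodic C T₀) (hSper : Function.Periodic S T₀)
    (hT₀min : ∀ T : ℝ, 0 < T → Function.Periodic C T → Function.Periodic S T → T₀ ≤ T)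
    (α β a d : ℝ)
    (hα : α = 1 / (n + 2)) (hβ : β = (n + 1) / (n + 2))
    (ha : a = T₀ / α) (hd : d = (2 * a) ^ (2 * β) / (2 * n + 2)) :
    Set.BijOn
      (fun q : ℝ × ℝ => ((a * q.1) ^ α * C (q.2 * T₀), (a * q.1) ^ β * S (q.2 * T₀)))
      (Set.Ioi (0:ℝ) ×ˢ Set.Ico (0:ℝ) 1)
      ({((0:ℝ), (0:ℝ))}ᶜ) := by
  have hCc : Continuous C := by
    rw [continuous_iff_continuousAt]; exact fun t => (hC' t).continuousAt
  have hSc : Continuous S := by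
    rw [continuous_iff_continuousAt]; exact fun t => (hS' t).continuousAt
  -- energy conservation
  have energy : ∀ t, ((n:ℝ)+1) * S t ^ 2 + C t ^ (2*n+2) = 1 := by
    have hE : ∀ t, HasDerivAt (fun t => ((n:ℝ)+1) * S t ^ 2 + C t ^ (2*n+2)) 0 t := by
      intro t
      have h1 := ((hS' t).pow 2).const_mul ((n:ℝ)+1)
      have h2 := (hC' t).pow (2*n+2)
      refine (h1.add h2).congr_deriv ?_
      push_cast
      ring
    have hconst := is_const_of_deriv_eq_zero (f := fun t => ((n:ℝ)+1) * S t ^ 2 + C t ^ (2*n+2))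
      (fun x => (hE x).differentiableAt) (fun x => (hE x).deriv)
    intro t
    have := hconst t 0
    rw [this, hC0, hS0]
    norm_num
  have hC1 : ∀ t, |C t| ≤ 1 := by
    intro t
    have h1 : C t ^ (2*n+2) ≤ 1 := by nlinarith [energy t, sq_nonneg (S t), Nat.cast_nonneg (α := ℝ) n]
    have h2 : |C t| ^ (2*n+2) ≤ 1 := by
      rwa [Even.pow_abs ⟨n+1, by ring⟩]
    exact (pow_le_one_iff_of_nonneg (abs_nonneg _) (by omega)).mp h2
  have hS1 : ∀ t, |S t| ≤ 1 := by
    intro t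
    have h1 : S t ^ 2 ≤ 1 := by
      have hp : (0:ℝ) ≤ C t ^ (2*n+2) := Even.pow_nonneg ⟨n+1, by ring⟩ _
      have hn1 : (1:ℝ) ≤ (n:ℝ) := Nat.one_le_cast.mpr hn
      nlinarith [energy t, sq_nonneg (S t)]
    exact abs_le_one_iff_mul_self_le_one.mpr (by nlinarith [h1])
  have hFb : ∀ t, ‖((C t, S t) : ℝ × ℝ)‖ ≤ 1 := by
    intro t
    rw [Prod.norm_def]
    exact max_le (by simpa [Real.norm_eq_abs] using hC1 t)
      (by simpa [Real.norm_eq_abs] using hS1 t)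
  have hFd : ∀ t, HasDerivAt (fun t => ((C t, S t) : ℝ × ℝ)) (S t, -(C t ^ (2*n+1))) t :=
    fun t => (hC' t).prodMk (hS' t)
  have huniq : ∀ G : ℝ → ℝ × ℝ, (∀ t, HasDerivAt G ((G t).2, -((G t).1 ^ (2*n+1))) t) →
      (∀ t, ‖G t‖ ≤ 1) → ∀ t0, ((C t0, S t0) : ℝ × ℝ) = G t0 → ∀ t, ((C t, S t) : ℝ × ℝ) = G t :=
    fun G hG hGb t0 h0 => ode_uniq (2*n+1) _ G hFd hFb hG hGb t0 h0
  have hper : ∀ t1 t2, C t1 = C t2 → S t1 = S t2 →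
      (Function.Periodic C (t2 - t1) ∧ Function.Periodic S (t2 - t1)) := by
    intro t1 t2 hCe hSe
    have hG : ∀ t, HasDerivAt (fun t => ((C (t + (t2 - t1)), S (t + (t2 - t1))) : ℝ × ℝ))
        (S (t + (t2-t1)), -(C (t + (t2-t1)) ^ (2*n+1))) t := by
      intro t
      have hg : HasDerivAt (fun t : ℝ => t + (t2 - t1)) 1 t := (hasDerivAt_id t).add_const _
      have h1 : HasDerivAt (fun t => C (t + (t2 - t1))) (S (t + (t2-t1))) t := by
        exact (HasDerivAt.comp t (hC' (t + (t2-t1))) hg).congr_deriv (mul_one _)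
      have h2 : HasDerivAt (fun t => S (t + (t2 - t1))) (-(C (t + (t2-t1)) ^ (2*n+1))) t := by
        exact (HasDerivAt.comp t (hS' (t + (t2-t1))) hg).congr_deriv (mul_one _)
      exact h1.prodMk h2
    have key := huniq _ hG (fun t => hFb _) t1
      (by rw [show t1 + (t2 - t1) = t2 by ring, hCe, hSe])
    constructor <;> intro x
    · exact (congrArg Prod.fst (key x)).symm
    · exact (congrArg Prod.snd (key x)).symm
  -- existence of a zero of C
  have exzero : ∃ t, 0 < t ∧ C t = 0 := by
    by_contra h
    push_neg at h
    have hpos : ∀ t, 0 < t → 0 < C t := by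
      intro t ht
      rcases (h t ht).lt_or_gt with hneg | hposi
      · exfalso
        have hsub : (0:ℝ) ∈ Icc (C t) (C 0) := ⟨hneg.le, by rw [hC0]; norm_num⟩
        obtain ⟨s, hs, hCs⟩ := intermediate_value_Icc' ht.le hCc.continuousOn hsub
        have hs0 : s ≠ 0 := by intro h0; rw [h0, hC0] at hCs; norm_num at hCs
        exact h s (lt_of_le_of_ne hs.1 (Ne.symm hs0)) hCs
      · exact hposi
    have hanti : StrictAntiOn S (Icc 0 T₀) := by
      apply strictAntiOn_of_deriv_neg (convex_Icc 0 T₀) hSc.continuousOn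
      intro x hx
      rw [interior_Icc] at hx
      rw [(hS' x).deriv]
      have hcx := hpos x hx.1
      have : 0 < C x ^ (2*n+1) := pow_pos hcx _
      linarith
    have : S T₀ < S 0 := hanti ⟨le_refl 0, hT₀pos.le⟩ ⟨hT₀pos.le, le_refl T₀⟩ hT₀pos
    rw [show T₀ = 0 + T₀ by ring, hSper 0] at this
    exact lt_irrefl _ this
  -- first zero t₁
  obtain ⟨z, hz0, hzC⟩ := exzero
  set Z : Set ℝ := {t : ℝ | 0 ≤ t ∧ C t = 0} with hZ
  have hZne : Z.Nonempty := ⟨z, hz0.le, hzC⟩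
  have hZbd : BddBelow Z := ⟨0, fun w hw => hw.1⟩
  have hZcl : IsClosed Z := by
    have : Z = Ici 0 ∩ C ⁻¹' {0} := by ext w; simp [hZ]
    rw [this]
    exact isClosed_Ici.inter (isClosed_singleton.preimage hCc)
  set t₁ := sInf Z with ht₁def
  have ht₁Z : t₁ ∈ Z := hZcl.csInf_mem hZne hZbd
  have ht₁C : C t₁ = 0 := ht₁Z.2
  have ht₁pos : 0 < t₁ := by
    rcases lt_or_eq_of_le ht₁Z.1 with h | h
    · exact h
    · exfalso; rw [← h, hC0] at ht₁C; norm_num at ht₁C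
  have hCposlt : ∀ t, 0 ≤ t → t < t₁ → 0 < C t := by
    intro t ht htl
    rcases lt_trichotomy (C t) 0 with hneg | hzero | hposi
    · exfalso
      have hsub : (0:ℝ) ∈ Icc (C t) (C 0) := ⟨hneg.le, by rw [hC0]; norm_num⟩
      obtain ⟨s, hs, hCs⟩ := intermediate_value_Icc' ht hCc.continuousOn hsub
      have : t₁ ≤ s := csInf_le hZbd ⟨hs.1, hCs⟩
      linarith [hs.2]
    · exfalso
      have : t₁ ≤ t := csInf_le hZbd ⟨ht, hzero⟩
      linarith
    · exact hposi
  -- S is nonpositive on [0, t₁]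
  have hSanti : AntitoneOn S (Icc 0 t₁) := by
    apply antitoneOn_of_deriv_nonpos (convex_Icc 0 t₁) hSc.continuousOn
    · intro x hx
      exact (hS' x).differentiableAt.differentiableWithinAt
    · intro x hx
      rw [interior_Icc] at hx
      rw [(hS' x).deriv]
      have := hCposlt x hx.1.le hx.2
      have : (0:ℝ) ≤ C x ^ (2*n+1) := by positivity
      linarith
  have hSle : ∀ t ∈ Icc 0 t₁, S t ≤ 0 := by
    intro t ht
    have := hSanti ⟨le_refl 0, ht₁pos.le⟩ ht ht.1
    rwa [hS0] at this
  -- quarter surjectivity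
  have hquarter : ∀ x y : ℝ, 0 ≤ x → y ≤ 0 → ((n:ℝ)+1) * y^2 + x^(2*n+2) = 1 →
      ∃ t, C t = x ∧ S t = y := by
    intro x y hx hy hxy
    have hx2 : x ^ (2*n+2) ≤ 1 := by nlinarith [sq_nonneg y, Nat.cast_nonneg (α := ℝ) n]
    have hx1 : x ≤ 1 := (pow_le_one_iff_of_nonneg hx (by omega)).mp hx2
    have hsub : x ∈ Icc (C t₁) (C 0) := by rw [ht₁C, hC0]; exact ⟨hx, hx1⟩
    obtain ⟨t, ht, hCt⟩ := intermediate_value_Icc' ht₁pos.le hCc.continuousOn hsub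
    refine ⟨t, hCt, ?_⟩
    have hSt : S t ≤ 0 := hSle t ht
    have he := energy t
    rw [hCt] at he
    have hA : ((n:ℝ)+1) ≠ 0 := by positivity
    have hsq : S t ^ 2 = y ^ 2 := by
      refine mul_left_cancel₀ hA ?_
      linarith
    have h2 : (S t - y) * (S t + y) = 0 := by linear_combination hsq
    rcases mul_eq_zero.mp h2 with h | h
    · linarith
    · linarith
  have hodd : Odd (2*n+1) := ⟨n, by ring⟩
  -- reflection symmetry about t₁
  have sym1 : ∀ t, C (2*t₁ - t) = -(C t) ∧ S (2*t₁ - t) = S t := by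
    have hG : ∀ t, HasDerivAt (fun t => ((-(C (2*t₁ - t)), S (2*t₁ - t)) : ℝ × ℝ))
        (S (2*t₁ - t), -((-(C (2*t₁ - t))) ^ (2*n+1))) t := by
      intro t
      have hg : HasDerivAt (fun t : ℝ => 2*t₁ - t) (-1) t := by
        simpa using (hasDerivAt_id t).const_sub (2*t₁)
      have h1 : HasDerivAt (fun t => -(C (2*t₁ - t))) (S (2*t₁ - t)) t := by
        have := (HasDerivAt.comp t (hC' (2*t₁ - t)) hg).neg
        refine this.congr_deriv ?_
        ring
      have h2 : HasDerivAt (fun t => S (2*t₁ - t)) (-((-(C (2*t₁ - t))) ^ (2*n+1))) t := by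
        have := HasDerivAt.comp t (hS' (2*t₁ - t)) hg
        refine this.congr_deriv ?_
        rw [hodd.neg_pow]
        ring
      exact h1.prodMk h2
    have hGb : ∀ t, ‖((-(C (2*t₁ - t)), S (2*t₁ - t)) : ℝ × ℝ)‖ ≤ 1 := by
      intro t
      rw [Prod.norm_def]
      exact max_le (by simpa [Real.norm_eq_abs, abs_neg] using hC1 (2*t₁ - t))
        (by simpa [Real.norm_eq_abs] using hS1 (2*t₁ - t))
    have key := huniq _ hG hGb t₁
      (by rw [show 2*t₁ - t₁ = t₁ by ring, ht₁C]; norm_num)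
    intro t
    have h := key t
    constructor
    · have := congrArg Prod.fst h
      simp only at this
      linarith
    · exact (congrArg Prod.snd h).symm
  -- antipodal symmetry
  have sym2 : ∀ t, C (t + 2*t₁) = -(C t) ∧ S (t + 2*t₁) = -(S t) := by
    have hG : ∀ t, HasDerivAt (fun t => ((-(C (t + 2*t₁)), -(S (t + 2*t₁))) : ℝ × ℝ))
        (-(S (t + 2*t₁)), -((-(C (t + 2*t₁))) ^ (2*n+1))) t := by
      intro t
      have hg : HasDerivAt (fun t : ℝ => t + 2*t₁) 1 t := (hasDerivAt_id t).add_const _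
      have h1 : HasDerivAt (fun t => -(C (t + 2*t₁))) (-(S (t + 2*t₁))) t := by
        have := (HasDerivAt.comp t (hC' (t + 2*t₁)) hg).neg
        refine this.congr_deriv ?_
        ring
      have h2 : HasDerivAt (fun t => -(S (t + 2*t₁))) (-((-(C (t + 2*t₁))) ^ (2*n+1))) t := by
        have := (HasDerivAt.comp t (hS' (t + 2*t₁)) hg).neg
        refine this.congr_deriv ?_
        rw [hodd.neg_pow]
        ring
      exact h1.prodMk h2
    have hGb : ∀ t, ‖((-(C (t + 2*t₁)), -(S (t + 2*t₁))) : ℝ × ℝ)‖ ≤ 1 := by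
      intro t
      rw [Prod.norm_def]
      exact max_le (by simpa [Real.norm_eq_abs, abs_neg] using hC1 (t + 2*t₁))
        (by simpa [Real.norm_eq_abs, abs_neg] using hS1 (t + 2*t₁))
    have hC2t₁ : C (2*t₁) = -1 := by
      have := (sym1 0).1
      rw [hC0] at this
      simpa using this
    have hS2t₁ : S (2*t₁) = 0 := by
      have := (sym1 0).2
      rw [hS0] at this
      simpa using this
    have key := huniq _ hG hGb 0
      (by rw [hC0, hS0]; simp [hC2t₁, hS2t₁])
    intro t
    have h := key t
    constructor
    · have := congrArg Prod.fst h
      simp only at this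
      linarith
    · have := congrArg Prod.snd h
      simp only at this
      linarith
  -- full level-set surjectivity
  have hlevel_le : ∀ x y : ℝ, y ≤ 0 → ((n:ℝ)+1) * y^2 + x^(2*n+2) = 1 →
      ∃ t, C t = x ∧ S t = y := by
    intro x y hy hxy
    rcases le_or_gt 0 x with hx | hx
    · exact hquarter x y hx hy hxy
    · have hxy' : ((n:ℝ)+1) * y^2 + (-x)^(2*n+2) = 1 := by
        rw [Even.neg_pow ⟨n+1, by ring⟩]
        exact hxy
      obtain ⟨t, hCt, hSt⟩ := hquarter (-x) y (by linarith) hy hxy'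
      refine ⟨2*t₁ - t, ?_, ?_⟩
      · rw [(sym1 t).1, hCt]; ring
      · rw [(sym1 t).2, hSt]
  have hlevel : ∀ x y : ℝ, ((n:ℝ)+1) * y^2 + x^(2*n+2) = 1 →
      ∃ t, C t = x ∧ S t = y := by
    intro x y hxy
    rcases le_or_gt y 0 with hy | hy
    · exact hlevel_le x y hy hxy
    · have hxy' : ((n:ℝ)+1) * (-y)^2 + (-x)^(2*n+2) = 1 := by
        rw [neg_sq, Even.neg_pow ⟨n+1, by ring⟩]
        exact hxy
      obtain ⟨t, hCt, hSt⟩ := hlevel_le (-x) (-y) (by linarith) hxy'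
      refine ⟨t + 2*t₁, ?_, ?_⟩
      · rw [(sym2 t).1, hCt]; ring
      · rw [(sym2 t).2, hSt]; ring
  -- level-set surjectivity with time in [0, T₀)
  have hlevel' : ∀ x y : ℝ, ((n:ℝ)+1) * y^2 + x^(2*n+2) = 1 →
      ∃ t ∈ Ico 0 T₀, C t = x ∧ S t = y := by
    intro x y hxy
    obtain ⟨t, hCt, hSt⟩ := hlevel x y hxy
    obtain ⟨k, hk, -⟩ := existsUnique_zsmul_near_of_pos' hT₀pos t
    exact ⟨t - k • T₀, hk, by rw [hCper.sub_zsmul_eq]; exact hCt,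
      by rw [hSper.sub_zsmul_eq]; exact hSt⟩
  -- injectivity of the flow on [0, T₀)
  have hinj : ∀ t1 ∈ Ico (0:ℝ) T₀, ∀ t2 ∈ Ico (0:ℝ) T₀, C t1 = C t2 → S t1 = S t2 → t1 = t2 := by
    have aux : ∀ t1 ∈ Ico (0:ℝ) T₀, ∀ t2 ∈ Ico (0:ℝ) T₀, t1 < t2 → C t1 = C t2 → S t1 = S t2 →
        False := by
      intro t1 ht1 t2 ht2 hlt hCe hSe
      obtain ⟨hc, hs⟩ := hper t1 t2 hCe hSe
      have := hT₀min (t2 - t1) (by linarith) hc hs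
      have : t2 - t1 < T₀ := by
        rcases ht1 with ⟨h10, _⟩
        rcases ht2 with ⟨_, h2T⟩
        linarith
      linarith [hT₀min (t2 - t1) (by linarith) hc hs]
    intro t1 ht1 t2 ht2 hCe hSe
    rcases lt_trichotomy t1 t2 with h | h | h
    · exact absurd (aux t1 ht1 t2 ht2 h hCe hSe) (not_false)
    · exact h
    · exact absurd (aux t2 ht2 t1 ht1 h hCe.symm hSe.symm) (not_false)
  -- scaling setup
  have hαpos : 0 < α := by rw [hα]; positivity
  have hβpos : 0 < β := by rw [hβ]; positivity
  have hapos : 0 < a := by rw [ha]; exact div_pos hT₀pos hαpos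
  have hβ2 : β * 2 ≠ 0 := by positivity
  have hr1 : ∀ ρ : ℝ, 0 < ρ → (ρ ^ β) ^ 2 = ρ ^ (β*2) := by
    intro ρ hρ
    rw [← Real.rpow_natCast (ρ ^ β) 2, ← Real.rpow_mul hρ.le]
    norm_num
  have hr2 : ∀ ρ : ℝ, 0 < ρ → (ρ ^ α) ^ (2*n+2) = ρ ^ (β*2) := by
    intro ρ hρ
    rw [← Real.rpow_natCast (ρ ^ α) (2*n+2), ← Real.rpow_mul hρ.le]
    congr 1
    rw [hα, hβ]
    push_cast
    field_simp
  have hPsiE : ∀ lam θ : ℝ, 0 < lam →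
      ((n:ℝ)+1) * ((a*lam) ^ β * S (θ*T₀))^2 + ((a*lam) ^ α * C (θ*T₀))^(2*n+2)
        = (a*lam) ^ (β*2) := by
    intro lam θ hlam
    have hρ : 0 < a * lam := mul_pos hapos hlam
    rw [mul_pow, mul_pow, hr1 _ hρ, hr2 _ hρ]
    linear_combination ((a*lam) ^ (β*2)) * energy (θ*T₀)
  refine ⟨?_, ?_, ?_⟩
  -- MapsTo
  · rintro ⟨lam, θ⟩ hq
    simp only [Set.mem_prod, Set.mem_Ioi, Set.mem_Ico] at hq
    simp only [Set.mem_compl_iff, Set.mem_singleton_iff, Prod.mk.injEq, not_and]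
    intro hx hy
    exfalso
    have hρ : 0 < a * lam := mul_pos hapos hq.1
    have hαne : (a*lam) ^ α ≠ 0 := (Real.rpow_pos_of_pos hρ α).ne'
    have hβne : (a*lam) ^ β ≠ 0 := (Real.rpow_pos_of_pos hρ β).ne'
    have hC0' : C (θ*T₀) = 0 := by
      rcases mul_eq_zero.mp hx with h | h
      · exact absurd h hαne
      · exact h
    have hS0' : S (θ*T₀) = 0 := by
      rcases mul_eq_zero.mp hy with h | h
      · exact absurd h hβne
      · exact h
    have := energy (θ*T₀)
    rw [hC0', hS0'] at this
    simp at this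
  -- InjOn
  · rintro ⟨l1, θ1⟩ h1 ⟨l2, θ2⟩ h2 heq
    simp only [Set.mem_prod, Set.mem_Ioi, Set.mem_Ico] at h1 h2
    simp only [Prod.mk.injEq] at heq
    obtain ⟨e1, e2⟩ := heq
    have hρ1 : 0 < a * l1 := mul_pos hapos h1.1
    have hρ2 : 0 < a * l2 := mul_pos hapos h2.1
    have hE12 : (a*l1) ^ (β*2) = (a*l2) ^ (β*2) := by
      rw [← hPsiE l1 θ1 h1.1, ← hPsiE l2 θ2 h2.1, e1, e2]
    have hρeq : a*l1 = a*l2 := Real.rpow_left_injOn hβ2 hρ1.le hρ2.le hE12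
    have hl : l1 = l2 := mul_left_cancel₀ hapos.ne' hρeq
    rw [hρeq] at e1 e2
    have hCeq : C (θ1*T₀) = C (θ2*T₀) :=
      mul_left_cancel₀ (Real.rpow_pos_of_pos hρ2 α).ne' e1
    have hSeq : S (θ1*T₀) = S (θ2*T₀) :=
      mul_left_cancel₀ (Real.rpow_pos_of_pos hρ2 β).ne' e2
    have hm1 : θ1*T₀ ∈ Ico (0:ℝ) T₀ := ⟨mul_nonneg h1.2.1 hT₀pos.le,
      by calc θ1*T₀ < 1*T₀ := mul_lt_mul_of_pos_right h1.2.2 hT₀pos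
           _ = T₀ := one_mul _⟩
    have hm2 : θ2*T₀ ∈ Ico (0:ℝ) T₀ := ⟨mul_nonneg h2.2.1 hT₀pos.le,
      by calc θ2*T₀ < 1*T₀ := mul_lt_mul_of_pos_right h2.2.2 hT₀pos
           _ = T₀ := one_mul _⟩
    have hθT : θ1*T₀ = θ2*T₀ := hinj _ hm1 _ hm2 hCeq hSeq
    have hθ : θ1 = θ2 := mul_right_cancel₀ hT₀pos.ne' hθT
    exact Prod.ext hl hθ
  -- SurjOn
  · intro p hp
    rw [Set.mem_compl_iff, Set.mem_singleton_iff] at hp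
    set h := ((n:ℝ)+1) * p.2^2 + p.1^(2*n+2) with hh
    have hh0 : 0 < h := by
      rw [hh]
      have h1 : 0 ≤ ((n:ℝ)+1) * p.2^2 := by positivity
      have h2 : 0 ≤ p.1^(2*n+2) := Even.pow_nonneg ⟨n+1, by ring⟩ _
      rcases eq_or_lt_of_le (add_nonneg h1 h2) with heq | hlt
      · exfalso
        have hz0 : ((n:ℝ)+1) * p.2^2 = 0 := le_antisymm (by linarith) h1
        have hz1 : p.2^2 = 0 := by
          rcases mul_eq_zero.mp hz0 with hcase | hcase
          · exact absurd hcase (by positivity)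
          · exact hcase
        have hz2 : p.1^(2*n+2) = 0 := by linarith
        have hp2 : p.2 = 0 := by
          exact pow_eq_zero_iff (by norm_num : (2:ℕ) ≠ 0) |>.mp hz1
        have hp1 : p.1 = 0 := pow_eq_zero_iff (by omega : 2*n+2 ≠ 0) |>.mp hz2
        exact hp (Prod.ext hp1 hp2)
      · exact hlt
    set ρ := h ^ (1/(β*2)) with hρdef
    have hρpos : 0 < ρ := Real.rpow_pos_of_pos hh0 _
    have hρh : ρ ^ (β*2) = h := by
      rw [hρdef, ← Real.rpow_mul hh0.le, one_div, inv_mul_cancel₀ hβ2, Real.rpow_one]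
    have hXne : ρ ^ (β*2) ≠ 0 := (Real.rpow_pos_of_pos hρpos _).ne'
    have hu : ((n:ℝ)+1) * (p.2 / ρ^β)^2 + (p.1 / ρ^α)^(2*n+2) = 1 := by
      rw [div_pow, div_pow, hr1 _ hρpos, hr2 _ hρpos, hρh]
      field_simp
      exact hh.symm
    obtain ⟨t, htm, hCt, hSt⟩ := hlevel' (p.1 / ρ^α) (p.2 / ρ^β) hu
    refine ⟨(ρ/a, t/T₀), ?_, ?_⟩
    · exact Set.mk_mem_prod (div_pos hρpos hapos)
        ⟨div_nonneg htm.1 hT₀pos.le, (div_lt_one hT₀pos).2 htm.2⟩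
    · simp only
      have h1 : a * (ρ/a) = ρ := by field_simp
      have h2 : t/T₀ * T₀ = t := div_mul_cancel₀ _ hT₀pos.ne'
      rw [h1, h2, hCt, hSt, mul_comm ((ρ:ℝ) ^ α), mul_comm ((ρ:ℝ) ^ β),
        div_mul_cancel₀ _ (Real.rpow_pos_of_pos hρpos α).ne',
        div_mul_cancel₀ _ (Real.rpow_pos_of_pos hρpos β).ne']
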